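/- arXiv:1502.03607 — 5 statements merged into one kernel-verified Lean document; each statement's English description precedes it below -/
import Mathlib

section
/- Let (A, (·,·), R) be an extended affine root supersystem over a field F of characteristic zero. If α is a nonzero real root (α ∈ R_re, α ≠ 0) and δ ∈ R_ns satisfies (δ, α) ≠ 0, then there is a unique r ∈ {1, −1} with δ + rα ∈ R; that is, exactly one of δ + α and δ − α lies in R. -/
open Pointwise

/-- A symmetric biadditive form with values in `F`. -/
structure IsSymForm {F : Type*} [Field F] {A : Type*} [AddCommGroup A]
    (form : A → A → F) : Prop where
  symm : ∀ a b, form a b = form b a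
  add_left : ∀ a b c, form (a + b) c = form a c + form b c

/-- The radical `A⁰` of a form. -/
def formRadical {F : Type*} [Field F] {A : Type*} [AddCommGroup A]
    (form : A → A → F) : Set A := {a | ∀ b, form a b = 0}

/-- The set of real roots `R_re = {α ∈ R | (α,α) ≠ 0} ∪ {0}`. -/
def reRoots {F : Type*} [Field F] {A : Type*} [AddCommGroup A]
    (form : A → A → F) (R : Set A) : Set A :=
  {α | α ∈ R ∧ form α α ≠ 0} ∪ {0}

/-- The set of nonsingular roots `R_ns = {α ∈ R \ A⁰ | (α,α) = 0} ∪ {0}`. -/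
def nsRoots {F : Type*} [Field F] {A : Type*} [AddCommGroup A]
    (form : A → A → F) (R : Set A) : Set A :=
  {α | α ∈ R ∧ form α α = 0 ∧ α ∉ formRadical form} ∪ {0}

/-- Extended affine root supersystem. -/
structure IsEARS {F : Type*} [Field F] [CharZero F] {A : Type*} [AddCommGroup A]
    (form : A → A → F) (R : Set A) extends IsSymForm form : Prop where
  zero_mem : (0 : A) ∈ R
  closure_eq_top : AddSubgroup.closure R = ⊤
  neg_mem : ∀ α ∈ R, -α ∈ R
  cartan : ∀ α ∈ R, form α α ≠ 0 → ∀ β ∈ R, ∃ k : ℤ, 2 * form α β = (k : F) * form α α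
  string : ∀ α ∈ R, form α α ≠ 0 → ∀ β ∈ R, ∃ p q : ℕ,
      2 * form β α = ((p : F) - (q : F)) * form α α ∧
      (∀ k : ℤ, β + k • α ∈ R ↔ -(p : ℤ) ≤ k ∧ k ≤ (q : ℤ))
  ns_string : ∀ α ∈ R, form α α = 0 → ∀ β ∈ R, form α β ≠ 0 →
      (β - α ∈ R ∨ β + α ∈ R)

/-- Locally finite root supersystem: an EARS with nondegenerate form. -/
def IsLFRSS {F : Type*} [Field F] [CharZero F] {A : Type*} [AddCommGroup A]
    (form : A → A → F) (R : Set A) : Prop :=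
  IsEARS form R ∧ ∀ a : A, (∀ b, form a b = 0) → a = 0

/-- `α` and `β` are connected in `X` by a finite chain with consecutive
elements non-orthogonal. -/
def ConnectedIn {F : Type*} [Field F] {A : Type*} [AddCommGroup A]
    (form : A → A → F) (X : Set A) (α β : A) : Prop :=
  ∃ (n : ℕ) (c : Fin (n + 1) → A), (∀ i, c i ∈ X) ∧ c 0 = α ∧ c (Fin.last n) = β ∧
    ∀ i : Fin n, form (c i.castSucc) (c i.succ) ≠ 0

/-- A connected subset. -/
def IsConnectedSet {F : Type*} [Field F] {A : Type*} [AddCommGroup A]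
    (form : A → A → F) (X : Set A) : Prop :=
  ∀ α ∈ X, ∀ β ∈ X, ConnectedIn form X α β

/-- Irreducibility: `R_re ≠ {0}` and `R \ R⁰` is connected. -/
def IsIrreducibleRSS {F : Type*} [Field F] {A : Type*} [AddCommGroup A]
    (form : A → A → F) (R : Set A) : Prop :=
  reRoots form R ≠ {0} ∧ IsConnectedSet form (R \ formRadical form)

/-- Sub-supersystem of a locally finite root supersystem. -/
def IsSubSupersystem {F : Type*} [Field F] {A : Type*} [AddCommGroup A]
    (form : A → A → F) (R S : Set A) : Prop :=
  S ⊆ R ∧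
  (∀ a ∈ AddSubgroup.closure S, (∀ b ∈ AddSubgroup.closure S, form a b = 0) → a = 0) ∧
  (0 : A) ∈ S ∧
  (∀ α ∈ S, form α α ≠ 0 → ∀ β ∈ S, ∀ k : ℤ,
      2 * form β α = (k : F) * form α α → β - k • α ∈ S) ∧
  (∀ γ ∈ S, form γ γ = 0 → ∀ β ∈ S, form β γ ≠ 0 → (γ - β ∈ S ∨ γ + β ∈ S))

/-- `Π` is an integral base of `R` (a `ℤ`-basis of the group generated by `R`). -/
def IsIntegralBase {F : Type*} [Field F] {A : Type*} [AddCommGroup A]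
    (form : A → A → F) (R P : Set A) : Prop :=
  P ⊆ R ∧ LinearIndependent ℤ (fun p : P => (p : A)) ∧
    Submodule.span ℤ P = Submodule.span ℤ R

/-- `Π` is a base of `R`. -/
def IsBase {F : Type*} [Field F] {A : Type*} [AddCommGroup A]
    (form : A → A → F) (R P : Set A) : Prop :=
  IsIntegralBase form R P ∧
  ∀ α ∈ R \ formRadical form, ∃ (n : ℕ) (a : Fin n → A) (r : Fin n → ℤ),
    (∀ i, a i ∈ P) ∧ (∀ i, r i = 1 ∨ r i = -1) ∧
    α = ∑ i, r i • a i ∧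
    ∀ t : Fin n, (∑ i ∈ Finset.Iic t, r i • a i) ∈ R \ formRadical form


private def formHomL {F : Type*} [Field F] {A : Type*} [AddCommGroup A]
    {form : A → A → F} (hs : IsSymForm form) (b : A) : A →+ F :=
  AddMonoidHom.mk' (fun x => form x b) (fun x y => hs.add_left x y b)

private lemma form_zero_left {F : Type*} [Field F] {A : Type*} [AddCommGroup A]
    {form : A → A → F} (hs : IsSymForm form) (b : A) : form 0 b = 0 :=
  (formHomL hs b).map_zero

private lemma form_zsmul_left {F : Type*} [Field F] {A : Type*} [AddCommGroup A]
    {form : A → A → F} (hs : IsSymForm form) (n : ℤ) (a b : A) :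
    form (n • a) b = (n : F) * form a b := by
  have := map_zsmul (formHomL hs b) n a
  simpa [formHomL, zsmul_eq_mul] using this

private lemma form_expand {F : Type*} [Field F] {A : Type*} [AddCommGroup A]
    {form : A → A → F} (hs : IsSymForm form) (n : ℤ) (δ α : A) :
    form (δ + n • α) (δ + n • α)
      = form δ δ + (2 * (n : F)) * form δ α + ((n : F) * n) * form α α := by
  have hR : ∀ a b c : A, form a (b + c) = form a b + form a c := by
    intro a b c
    rw [hs.symm, hs.add_left, hs.symm b a, hs.symm c a]
  rw [hs.add_left, form_zsmul_left hs, hR, hR, hs.symm δ (n • α), hs.symm α (n • α),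
    form_zsmul_left hs, form_zsmul_left hs, hs.symm α δ]
  ring

private lemma form_expand' {F : Type*} [Field F] {A : Type*} [AddCommGroup A]
    {form : A → A → F} (hs : IsSymForm form) (n : ℤ) (δ α : A) :
    form (δ + n • α) δ = form δ δ + (n : F) * form α δ := by
  rw [hs.add_left, form_zsmul_left hs]

theorem stmt0 {F : Type*} [Field F] [CharZero F] {A : Type*} [AddCommGroup A]
    (form : A → A → F) (R : Set A) (h : IsEARS form R)
    (α : A) (hα : α ∈ reRoots form R) (hα0 : α ≠ 0)
    (δ : A) (hδ : δ ∈ nsRoots form R) (hδα : form δ α ≠ 0) :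
    ∃! r : ℤ, (r = 1 ∨ r = -1) ∧ δ + r • α ∈ R := by
  obtain ⟨hαR, hαα⟩ : α ∈ R ∧ form α α ≠ 0 := by
    rcases hα with h' | h'
    · exact h'
    · exact absurd h' hα0
  have hδR : δ ∈ R := by
    rcases hδ with h' | h'
    · exact h'.1
    · exact absurd (by rw [Set.mem_singleton_iff.mp h']; exact form_zero_left h.toIsSymForm α) hδα
  have hδδ : form δ δ = 0 := by
    rcases hδ with h' | h'
    · exact h'.2.1
    · exact absurd (by rw [Set.mem_singleton_iff.mp h']; exact form_zero_left h.toIsSymForm α) hδα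
  obtain ⟨p, q, hpq, hmem⟩ := h.string α hαR hαα δ hδR
  set c := form α α with hc
  set d := form δ α with hd
  have hpqne : (p : ℤ) ≠ q := by
    intro he
    apply hδα
    have hF : ((p : F) - q) = 0 := by
      have h' : ((p : F)) = (q : F) := by exact_mod_cast he
      rw [h', sub_self]
    have h2 := hpq
    rw [hF, zero_mul] at h2
    exact (mul_eq_zero.mp h2).resolve_left two_ne_zero
  -- main claim: p = 0 or q = 0
  have hkey : p = 0 ∨ q = 0 := by
    by_contra hcon
    push_neg at hcon
    obtain ⟨hp0, hq0⟩ := hcon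
    have hpF : ((p : ℕ) : F) ≠ 0 := Nat.cast_ne_zero.mpr hp0
    have hqF : ((q : ℕ) : F) ≠ 0 := Nat.cast_ne_zero.mpr hq0
    have hβR : δ + (q : ℤ) • α ∈ R := (hmem q).mpr ⟨by omega, le_refl _⟩
    have hγR : δ + (-(p : ℤ)) • α ∈ R := (hmem (-(p : ℤ))).mpr ⟨le_refl _, by omega⟩
    have hββ : form (δ + (q : ℤ) • α) (δ + (q : ℤ) • α) = (q : F) * p * c := by
      rw [form_expand h.toIsSymForm, hδδ]
      push_cast
      linear_combination (q : F) * hpq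
    have hγγ : form (δ + (-(p : ℤ)) • α) (δ + (-(p : ℤ)) • α) = (p : F) * q * c := by
      rw [form_expand h.toIsSymForm, hδδ]
      push_cast
      linear_combination (-(p : F)) * hpq
    have hββ0 : form (δ + (q : ℤ) • α) (δ + (q : ℤ) • α) ≠ 0 := by
      rw [hββ]; exact mul_ne_zero (mul_ne_zero hqF hpF) hαα
    have hγγ0 : form (δ + (-(p : ℤ)) • α) (δ + (-(p : ℤ)) • α) ≠ 0 := by
      rw [hγγ]; exact mul_ne_zero (mul_ne_zero hpF hqF) hαα
    obtain ⟨k, hk⟩ := h.cartan _ hβR hββ0 δ hδR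
    obtain ⟨m, hm⟩ := h.cartan _ hγR hγγ0 δ hδR
    have hβδ : form (δ + (q : ℤ) • α) δ = (q : F) * d := by
      rw [form_expand' h.toIsSymForm, hδδ, h.symm α δ]
      push_cast
      ring
    have hγδ : form (δ + (-(p : ℤ)) • α) δ = -(p : F) * d := by
      rw [form_expand' h.toIsSymForm, hδδ, h.symm α δ]
      push_cast
      ring
    rw [hβδ, hββ] at hk
    rw [hγδ, hγγ] at hm
    have hkZ : (p : ℤ) - q = k * p := by
      have hF : ((p : F) - q) = (k : F) * p := by
        have e1 : (q : F) * (((p : F) - q) * c) = (q : F) * ((k : F) * p * c) := by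
          linear_combination hk - (q : F) * hpq
        have e2 := mul_left_cancel₀ hqF e1
        exact mul_right_cancel₀ hαα e2
      exact_mod_cast hF
    have hmZ : (q : ℤ) - p = m * q := by
      have hF : ((q : F) - p) = (m : F) * q := by
        have e1 : (p : F) * (((q : F) - p) * c) = (p : F) * ((m : F) * q * c) := by
          linear_combination hm + (p : F) * hpq
        have e2 := mul_left_cancel₀ hpF e1
        exact mul_right_cancel₀ hαα e2
      exact_mod_cast hF
    have hp1' : (1 : ℤ) ≤ p := by exact_mod_cast Nat.one_le_iff_ne_zero.mpr hp0
    have hq1' : (1 : ℤ) ≤ q := by exact_mod_cast Nat.one_le_iff_ne_zero.mpr hq0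
    rcases lt_trichotomy (p : ℤ) q with hlt | heq | hgt
    · have hm1 : 1 ≤ m := by
        by_contra hcm
        push_neg at hcm
        have hm0 : m ≤ 0 := by omega
        nlinarith
      have h1 : 1 * (q : ℤ) ≤ m * q := mul_le_mul_of_nonneg_right hm1 (by omega)
      rw [← hmZ] at h1
      omega
    · exact hpqne heq
    · have hk1 : 1 ≤ k := by
        by_contra hck
        push_neg at hck
        have hk0 : k ≤ 0 := by omega
        nlinarith
      have h1 : 1 * (p : ℤ) ≤ k * p := mul_le_mul_of_nonneg_right hk1 (by omega)
      rw [← hkZ] at h1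
      omega
  rcases hkey with hp0 | hq0
  · have hq1 : 1 ≤ (q : ℤ) := by omega
    refine ⟨1, ⟨Or.inl rfl, (hmem 1).mpr ⟨by omega, hq1⟩⟩, ?_⟩
    rintro r ⟨hr | hr, hrR⟩
    · exact hr
    · exfalso
      have := (hmem r).mp hrR
      omega
  · have hp1 : 1 ≤ (p : ℤ) := by omega
    refine ⟨-1, ⟨Or.inr rfl, (hmem (-1)).mpr ⟨by omega, by omega⟩⟩, ?_⟩
    rintro r ⟨hr | hr, hrR⟩
    · exfalso
      have := (hmem r).mp hrR
      omega
    · exact hr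
end

section
/- Let A be a nontrivial additive abelian group, (·,·): A × A → F a nondegenerate symmetric form with values in a field F of characteristic zero, and R a subset of A. If the triple (A, (·,·), R) satisfies axioms (S1), (S3), (S4) and (S5) of an extended affine root supersystem, then it also satisfies (S2), i.e., R = −R. -/
open Pointwise

set_option linter.unusedSectionVars false

section Aux

variable {F : Type*} [Field F] [CharZero F] {A : Type*} [AddCommGroup A]
variable {form : A → A → F} {R : Set A}

lemma IsSymForm.add_right (hs : IsSymForm form) (a b c : A) :
    form a (b + c) = form a b + form a c := by
  rw [hs.symm, hs.add_left, hs.symm b a, hs.symm c a]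

lemma IsSymForm.zero_left (hs : IsSymForm form) (b : A) : form 0 b = 0 := by
  have := hs.add_left 0 0 b; simpa using this

lemma IsSymForm.neg_left (hs : IsSymForm form) (a b : A) : form (-a) b = -form a b := by
  have := hs.add_left a (-a) b
  simp only [add_neg_cancel, hs.zero_left] at this
  linear_combination -this

lemma IsSymForm.sub_left (hs : IsSymForm form) (a b c : A) :
    form (a - b) c = form a c - form b c := by
  rw [sub_eq_add_neg, hs.add_left, hs.neg_left]; ring

lemma IsSymForm.zsmul_left (hs : IsSymForm form) (k : ℤ) (a b : A) :
    form (k • a) b = (k : F) * form a b := by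
  let f : A →+ F := AddMonoidHom.mk' (fun x => form x b) (fun x y => hs.add_left x y b)
  have : form (k • a) b = f (k • a) := rfl
  rw [this, map_zsmul, zsmul_eq_mul]; rfl

lemma IsSymForm.neg_right (hs : IsSymForm form) (a b : A) : form a (-b) = -form a b := by
  rw [hs.symm, hs.neg_left, hs.symm]

lemma IsSymForm.sub_right (hs : IsSymForm form) (a b c : A) :
    form a (b - c) = form a b - form a c := by
  rw [hs.symm, hs.sub_left, hs.symm b a, hs.symm c a]

lemma IsSymForm.zsmul_right (hs : IsSymForm form) (k : ℤ) (a b : A) :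
    form a (k • b) = (k : F) * form a b := by
  rw [hs.symm, hs.zsmul_left, hs.symm]

end Aux

section Main

variable {F : Type*} [Field F] [CharZero F] {A : Type*} [AddCommGroup A]
variable {form : A → A → F} {R : Set A}

/-- A real root has its negative in `R`, via its own root string. -/
lemma neg_mem_of_real
    (hS4 : ∀ α ∈ R, form α α ≠ 0 → ∀ β ∈ R, ∃ p q : ℕ,
        2 * form β α = ((p : F) - (q : F)) * form α α ∧
        (∀ k : ℤ, β + k • α ∈ R ↔ -(p : ℤ) ≤ k ∧ k ≤ (q : ℤ)))
    {α : A} (hα : α ∈ R) (hαα : form α α ≠ 0) : -α ∈ R := by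
  obtain ⟨p, q, heq, hmem⟩ := hS4 α hα hαα α hα
  have hpqF : ((p : F) - q) = 2 := by
    have h2 : ((p : F) - q) * form α α = 2 * form α α := heq.symm
    exact mul_right_cancel₀ hαα h2
  have hpq : (p : ℤ) - q = 2 := by exact_mod_cast hpqF
  have h := (hmem (-2)).2 ⟨by omega, by omega⟩
  have e : α + (-2 : ℤ) • α = -α := by
    rw [neg_smul]; push_cast; rw [two_smul]; abel
  rwa [e] at h

/-- The key lemma: `α` nonsingular, `β ∈ R` real, with `2(α,β) = m(β,β)`, `m ≥ 1`.
Then `-α ∈ R`. -/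
lemma key
    (hs : IsSymForm form)
    (hS3 : ∀ α ∈ R, form α α ≠ 0 → ∀ β ∈ R, ∃ k : ℤ, 2 * form α β = (k : F) * form α α)
    (hS4 : ∀ α ∈ R, form α α ≠ 0 → ∀ β ∈ R, ∃ p q : ℕ,
        2 * form β α = ((p : F) - (q : F)) * form α α ∧
        (∀ k : ℤ, β + k • α ∈ R ↔ -(p : ℤ) ≤ k ∧ k ≤ (q : ℤ)))
    (hS5 : ∀ α ∈ R, form α α = 0 → ∀ β ∈ R, form α β ≠ 0 → (β - α ∈ R ∨ β + α ∈ R))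
    {α β : A} (hα : α ∈ R) (hβ : β ∈ R) (hαα : form α α = 0) (hββ : form β β ≠ 0)
    {m : ℤ} (hm : 2 * form α β = (m : F) * form β β) (hm1 : 1 ≤ m) : -α ∈ R := by
  set b := form α β with hbdef
  set c := form β β with hcdef
  have hmF : ((m : F)) ≠ 0 := Int.cast_ne_zero.2 (by omega)
  have hb : b ≠ 0 := by
    intro h0
    have h1 : (m : F) * c = 0 := by rw [← hm, h0, mul_zero]
    exact (mul_ne_zero hmF hββ) h1
  obtain ⟨p, q, heq, hmem⟩ := hS4 β hβ hββ α hα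
  -- heq : 2 * form α β = ((p:F) - q) * c
  have hpqF : ((p : F) - q) = (m : F) := by
    apply mul_right_cancel₀ hββ
    rw [← heq, hm]
  have hpq : (p : ℤ) - q = m := by exact_mod_cast hpqF
  by_cases hq : 1 ≤ (q : ℤ)
  · -- Case A : the string goes both directions; bottom of string is real.
    have hδ : α + (-(p : ℤ)) • β ∈ R := (hmem (-(p : ℤ))).2 ⟨by omega, by omega⟩
    have hδδ2 : (2 : F) * form (α + (-(p : ℤ)) • β) (α + (-(p : ℤ)) • β)
        = ((2 * p * q : ℤ) : F) * c := by
      simp only [hs.add_left, hs.add_right, hs.zsmul_left, hs.zsmul_right, hs.symm β α,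
        ← hbdef, ← hcdef, hαα]
      push_cast
      linear_combination (-2 * (p : F)) * hm + 2 * (p : F) * c * hpqF
    have hδδ : form (α + (-(p : ℤ)) • β) (α + (-(p : ℤ)) • β) ≠ 0 := by
      intro h0
      rw [h0, mul_zero] at hδδ2
      have : ((2 * p * q : ℤ) : F) ≠ 0 := by
        have hp0 : (0 : ℤ) < p := by omega
        have hq0' : (0 : ℤ) < q := by omega
        exact Int.cast_ne_zero.2 (mul_pos (mul_pos (by norm_num) hp0) hq0').ne'
      exact (mul_ne_zero this hββ) hδδ2.symm
    have hnδ : -(α + (-(p : ℤ)) • β) ∈ R := neg_mem_of_real hS4 hδ hδδ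
    obtain ⟨p', q', heq', hmem'⟩ := hS4 β hβ hββ _ hnδ
    -- heq' : 2 * form (-(α + (-p)•β)) β = ((p':F) - q') * c
    have hval : (2 : F) * form (-(α + (-(p : ℤ)) • β)) β = (((p : ℤ) + q : ℤ) : F) * c := by
      simp only [hs.neg_left, hs.add_left, hs.zsmul_left, ← hbdef, ← hcdef]
      push_cast
      linear_combination (-1 : F) * hm + c * hpqF
    have hpq' : (p' : ℤ) - q' = (p : ℤ) + q := by
      have : ((p' : F) - q') = (((p : ℤ) + q : ℤ) : F) := by
        apply mul_right_cancel₀ hββ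
        rw [← heq', hval]
      exact_mod_cast this
    have h := (hmem' (-(p : ℤ))).2 ⟨by omega, by omega⟩
    have e : -(α + (-(p : ℤ)) • β) + (-(p : ℤ)) • β = -α := by abel
    rwa [e] at h
  · -- Case B : q = 0, so p = m ≥ 1, and β + α ∉ R.
    have hq0 : (q : ℤ) = 0 := by omega
    have hnotin : β + α ∉ R := by
      intro h
      have e : β + α = α + (1 : ℤ) • β := by rw [one_zsmul]; abel
      rw [e] at h
      have := (hmem 1).1 h
      omega
    have hγ : β - α ∈ R := by
      rcases hS5 α hα hαα β hβ hb with h | h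
      · exact h
      · exact absurd h hnotin
    by_cases hm2 : m = 1
    · -- string of β through β - α goes down at least one step
      obtain ⟨p', q', heq', hmem'⟩ := hS4 β hβ hββ _ hγ
      have hval : (2 : F) * form (β - α) β = ((2 - m : ℤ) : F) * c := by
        simp only [hs.sub_left, ← hbdef, ← hcdef, hs.symm β α]
        push_cast
        linear_combination (-1 : F) * hm
      have hpq' : (p' : ℤ) - q' = 2 - m := by
        have : ((p' : F) - q') = ((2 - m : ℤ) : F) := by
          apply mul_right_cancel₀ hββ
          rw [← heq', hval]
        exact_mod_cast this
      have h := (hmem' (-1)).2 ⟨by omega, by omega⟩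
      have e : β - α + (-1 : ℤ) • β = -α := by
        rw [neg_smul, one_zsmul]; abel
      rwa [e] at h
    · -- m ≥ 2 : γ = β - α is real; integrality (S3) forces m = 2.
      have hm2' : 2 ≤ m := by omega
      have hγγ2 : (2 : F) * form (β - α) (β - α) = ((2 - 2 * m : ℤ) : F) * c := by
        simp only [hs.sub_left, hs.sub_right, ← hbdef, ← hcdef, hs.symm β α, hαα]
        push_cast
        linear_combination (-2 : F) * hm
      have hγγ : form (β - α) (β - α) ≠ 0 := by
        intro h0
        rw [h0, mul_zero] at hγγ2
        have : ((2 - 2 * m : ℤ) : F) ≠ 0 := Int.cast_ne_zero.2 (by omega)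
        exact (mul_ne_zero this hββ) hγγ2.symm
      obtain ⟨t, ht⟩ := hS3 _ hγ hγγ α hα
      -- ht : 2 * form (β - α) α = t * form (β - α) (β - α)
      have htZ : 2 * m = t * (2 - 2 * m) := by
        have hF : ((2 * m : ℤ) : F) * c = ((t * (2 - 2 * m) : ℤ) : F) * c := by
          have h1 : (2 : F) * (2 * form (β - α) α) = (2 : F) * ((t : F) * form (β - α) (β - α)) := by
            rw [ht]
          have h2 : (2 : F) * (2 * form (β - α) α) = ((2 * m : ℤ) : F) * c := by
            simp only [hs.sub_left, hs.symm β α, ← hbdef, hαα]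
            push_cast
            linear_combination (2 : F) * hm
          have h3 : (2 : F) * ((t : F) * form (β - α) (β - α)) = ((t * (2 - 2 * m) : ℤ) : F) * c := by
            push_cast
            push_cast at hγγ2
            linear_combination (t : F) * hγγ2
          rw [← h2, h1, h3]
        have := mul_right_cancel₀ hββ hF
        exact_mod_cast this
      have htZ2 : m = t * (1 - m) := by
        have h5 : (2 : ℤ) * m = 2 * (t * (1 - m)) := by linear_combination htZ
        exact mul_left_cancel₀ two_ne_zero h5
      have hdvd : (m - 1) * (-(t + 1)) = 1 := by linear_combination -htZ2
      have hmle : m - 1 ≤ 1 := Int.le_of_dvd (by norm_num) ⟨-(t + 1), hdvd.symm⟩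
      have hm2e : m = 2 := by omega
      subst hm2e
      -- now b = c; α + 2(β - α) = 2β - α ∈ R via the γ-string through α
      obtain ⟨p₂, q₂, heq₂, hmem₂⟩ := hS4 _ hγ hγγ α hα
      -- heq₂ : 2 * form α (β - α) = ((p₂:F) - q₂) * form (β-α) (β-α)
      have hpq₂ : (p₂ : ℤ) - q₂ = -2 := by
        have hval₂ : 2 * form α (β - α) = (-2 : F) * form (β - α) (β - α) := by
          simp only [hs.sub_right, hs.sub_left, hs.symm β α, ← hbdef, ← hcdef, hαα]
          push_cast at hm
          linear_combination (-1 : F) * hm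
        have h4 : ((p₂ : F) - q₂) = -2 := by
          apply mul_right_cancel₀ hγγ
          rw [← heq₂, hval₂]
        exact_mod_cast h4
      have hδ₂ : α + (2 : ℤ) • (β - α) ∈ R := (hmem₂ 2).2 ⟨by omega, by omega⟩
      obtain ⟨p₄, q₄, heq₄, hmem₄⟩ := hS4 β hβ hββ _ hδ₂
      have hval₄ : (2 : F) * form (α + (2 : ℤ) • (β - α)) β = ((2 : ℤ) : F) * c := by
        simp only [hs.add_left, hs.zsmul_left, hs.sub_left, hs.symm β α, ← hbdef, ← hcdef]
        push_cast
        push_cast at hm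
        linear_combination (-1 : F) * hm
      have hpq₄ : (p₄ : ℤ) - q₄ = 2 := by
        have : ((p₄ : F) - q₄) = ((2 : ℤ) : F) := by
          apply mul_right_cancel₀ hββ
          rw [← heq₄, hval₄]
        exact_mod_cast this
      have h := (hmem₄ (-2)).2 ⟨by omega, by omega⟩
      have e : α + (2 : ℤ) • (β - α) + (-2 : ℤ) • β = -α := by
        have : ((2:ℤ) • (β - α)) = (2:ℤ) • β - (2:ℤ) • α := smul_sub 2 β α
        rw [this]
        push_cast
        rw [two_smul, two_smul]
        abel
      rwa [e] at h

end Main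

section Main2

variable {F : Type*} [Field F] [CharZero F] {A : Type*} [AddCommGroup A]
variable {form : A → A → F} {R : Set A}

/-- `α` nonsingular, `β ∈ R` real, non-orthogonal to `α`: then `-α ∈ R`. -/
lemma key2
    (hs : IsSymForm form)
    (hS3 : ∀ α ∈ R, form α α ≠ 0 → ∀ β ∈ R, ∃ k : ℤ, 2 * form α β = (k : F) * form α α)
    (hS4 : ∀ α ∈ R, form α α ≠ 0 → ∀ β ∈ R, ∃ p q : ℕ,
        2 * form β α = ((p : F) - (q : F)) * form α α ∧
        (∀ k : ℤ, β + k • α ∈ R ↔ -(p : ℤ) ≤ k ∧ k ≤ (q : ℤ)))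
    (hS5 : ∀ α ∈ R, form α α = 0 → ∀ β ∈ R, form α β ≠ 0 → (β - α ∈ R ∨ β + α ∈ R))
    {α β : A} (hα : α ∈ R) (hβ : β ∈ R) (hαα : form α α = 0) (hββ : form β β ≠ 0)
    (hab : form α β ≠ 0) : -α ∈ R := by
  obtain ⟨m, hm⟩ := hS3 β hβ hββ α hα
  rw [hs.symm β α] at hm
  -- hm : 2 * form α β = m * form β β
  have hm0 : m ≠ 0 := by
    intro h0
    rw [h0] at hm
    simp only [Int.cast_zero, zero_mul, mul_eq_zero] at hm
    rcases hm with h | h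
    · norm_num at h
    · exact hab h
  rcases le_or_gt 1 m with h1 | h1
  · exact key hs hS3 hS4 hS5 hα hβ hαα hββ hm h1
  · have hm1 : 1 ≤ -m := by omega
    have hnβ : -β ∈ R := neg_mem_of_real hS4 hβ hββ
    have hββ' : form (-β) (-β) ≠ 0 := by
      rwa [hs.neg_left, hs.neg_right, neg_neg]
    have hm' : 2 * form α (-β) = ((-m : ℤ) : F) * form (-β) (-β) := by
      rw [hs.neg_right, hs.neg_left, hs.neg_right, neg_neg]
      push_cast
      linear_combination -hm
    exact key hs hS3 hS4 hS5 hα hnβ hαα hββ' hm' hm1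

end Main2

theorem stmt2_aux {F : Type*} [Field F] [CharZero F] {A : Type*} [AddCommGroup A] [Nontrivial A]
    (form : A → A → F) (R : Set A)
    (hs : IsSymForm form)
    (hnd : ∀ a : A, (∀ b, form a b = 0) → a = 0)
    (hS1 : (0 : A) ∈ R ∧ AddSubgroup.closure R = ⊤)
    (hS3 : ∀ α ∈ R, form α α ≠ 0 → ∀ β ∈ R, ∃ k : ℤ, 2 * form α β = (k : F) * form α α)
    (hS4 : ∀ α ∈ R, form α α ≠ 0 → ∀ β ∈ R, ∃ p q : ℕ,
        2 * form β α = ((p : F) - (q : F)) * form α α ∧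
        (∀ k : ℤ, β + k • α ∈ R ↔ -(p : ℤ) ≤ k ∧ k ≤ (q : ℤ)))
    (hS5 : ∀ α ∈ R, form α α = 0 → ∀ β ∈ R, form α β ≠ 0 → (β - α ∈ R ∨ β + α ∈ R)) :
    R = -R := by
  have hneg : ∀ γ ∈ R, -γ ∈ R := by
    intro γ hγ
    by_cases hγγ : form γ γ = 0
    · by_cases hrad : ∀ β ∈ R, form γ β = 0
      · -- γ is in the radical, hence γ = 0
        have hγ0 : γ = 0 := by
          apply hnd
          intro b
          let f : A →+ F := AddMonoidHom.mk' (fun x => form x γ) (fun x y => hs.add_left x y γ)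
          have hsub : AddSubgroup.closure R ≤ f.ker := by
            rw [AddSubgroup.closure_le]
            intro β hβ
            have : f β = 0 := by
              show form β γ = 0
              rw [hs.symm β γ]
              exact hrad β hβ
            simpa [AddMonoidHom.mem_ker] using this
          rw [hS1.2] at hsub
          have hb : f b = 0 := hsub (AddSubgroup.mem_top b)
          rw [hs.symm γ b]
          exact hb
        rw [hγ0, neg_zero]
        exact hS1.1
      · push_neg at hrad
        obtain ⟨β, hβ, hab⟩ := hrad
        by_cases hββ : form β β = 0
        · -- find a real partner using (S5)
          have hβγ : form β γ ≠ 0 := by rwa [hs.symm]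
          rcases hS5 β hβ hββ γ hγ hβγ with h | h
          · -- γ - β ∈ R is real
            have hδδ : form (γ - β) (γ - β) ≠ 0 := by
              rw [hs.sub_left, hs.sub_right, hs.sub_right, hγγ, hββ, hs.symm β γ]
              intro h0
              apply hab
              have h2 : (-2 : F) * form γ β = 0 := by linear_combination h0
              simpa using (mul_eq_zero.1 h2).resolve_left (by norm_num)
            have hγδ : form γ (γ - β) ≠ 0 := by
              rw [hs.sub_right, hγγ]
              simpa using hab
            exact key2 hs hS3 hS4 hS5 hγ h hγγ hδδ hγδ
          · -- γ + β ∈ R is real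
            have hδδ : form (γ + β) (γ + β) ≠ 0 := by
              rw [hs.add_left, hs.add_right, hs.add_right, hγγ, hββ, hs.symm β γ]
              intro h0
              apply hab
              have h2 : (2 : F) * form γ β = 0 := by linear_combination h0
              simpa using (mul_eq_zero.1 h2).resolve_left (by norm_num)
            have hγδ : form γ (γ + β) ≠ 0 := by
              rw [hs.add_right, hγγ]
              simpa using hab
            exact key2 hs hS3 hS4 hS5 hγ h hγγ hδδ hγδ
        · exact key2 hs hS3 hS4 hS5 hγ hβ hγγ hββ hab
    · exact neg_mem_of_real hS4 hγ hγγ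
  ext x
  simp only [Set.mem_neg]
  constructor
  · intro hx
    exact hneg x hx
  · intro hx
    have := hneg _ hx
    rwa [neg_neg] at this


theorem stmt2 {F : Type*} [Field F] [CharZero F] {A : Type*} [AddCommGroup A] [Nontrivial A]
    (form : A → A → F) (R : Set A)
    (hs : IsSymForm form)
    (hnd : ∀ a : A, (∀ b, form a b = 0) → a = 0)
    (hS1 : (0 : A) ∈ R ∧ AddSubgroup.closure R = ⊤)
    (hS3 : ∀ α ∈ R, form α α ≠ 0 → ∀ β ∈ R, ∃ k : ℤ, 2 * form α β = (k : F) * form α α)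
    (hS4 : ∀ α ∈ R, form α α ≠ 0 → ∀ β ∈ R, ∃ p q : ℕ,
        2 * form β α = ((p : F) - (q : F)) * form α α ∧
        (∀ k : ℤ, β + k • α ∈ R ↔ -(p : ℤ) ≤ k ∧ k ≤ (q : ℤ)))
    (hS5 : ∀ α ∈ R, form α α = 0 → ∀ β ∈ R, form α β ≠ 0 → (β - α ∈ R ∨ β + α ∈ R)) :
    R = -R := stmt2_aux form R hs hnd hS1 hS3 hS4 hS5
end

section
/- Let (A, (·,·), R) be a locally finite root supersystem over a field F of characteristic zero. If S is a connected component of R \ {0} (an equivalence class of the connectedness relation), then S ∪ {0} is an irreducible sub-supersystem of R. Moreover, R is the direct sum of irreducible sub-supersystems: there is a family {R_i}_{i∈I} of irreducible sub-supersystems of R which are pairwise orthogonal with respect to the form and such that R \ {0} is the disjoint union of the sets R_i \ {0}. -/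
open Pointwise

section Aux
set_option linter.unusedSectionVars false

variable {F : Type*} [Field F] {A : Type*} [AddCommGroup A] {form : A → A → F}

/-- bundled hom in the first slot -/
private def formAddHom (h : IsSymForm form) (c : A) : A →+ F where
  toFun a := form a c
  map_zero' := by
    have h0 := h.add_left 0 0 c
    rw [add_zero] at h0
    nth_rewrite 1 [← add_zero (form 0 c)] at h0
    exact (add_left_cancel h0).symm
  map_add' a b := h.add_left a b c

lemma form_zero_left_s6 (h : IsSymForm form) (c : A) : form 0 c = 0 :=
  (formAddHom h c).map_zero

lemma form_zero_right (h : IsSymForm form) (c : A) : form c 0 = 0 := by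
  rw [h.symm]; exact form_zero_left_s6 h c

lemma form_sub_left (h : IsSymForm form) (a b c : A) :
    form (a - b) c = form a c - form b c := (formAddHom h c).map_sub a b

lemma form_add_right (h : IsSymForm form) (a b c : A) :
    form c (a + b) = form c a + form c b := by
  rw [h.symm, h.add_left, h.symm a, h.symm b]

lemma form_neg_left (h : IsSymForm form) (a c : A) : form (-a) c = - form a c :=
  (formAddHom h c).map_neg a

lemma form_zsmul_left_s6 (h : IsSymForm form) (n : ℤ) (a c : A) :
    form (n • a) c = n * form a c := by
  have h1 : form (n • a) c = formAddHom h c (n • a) := rfl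
  rw [h1, AddMonoidHom.map_zsmul, zsmul_eq_mul]
  rfl

/-- step relation for connectivity -/
def formStep (form : A → A → F) (X : Set A) (a b : A) : Prop :=
  a ∈ X ∧ b ∈ X ∧ form a b ≠ 0

lemma formStep_symm (h : IsSymForm form) (X : Set A) : Symmetric (formStep form X) :=
  fun _ _ hab => ⟨hab.2.1, hab.1, by rw [h.symm]; exact hab.2.2⟩

lemma conn_snoc {X : Set A} {α β γ : A} (hc : ConnectedIn form X α β)
    (hγ : γ ∈ X) (hf : form β γ ≠ 0) : ConnectedIn form X α γ := by
  obtain ⟨n, c, hmem, h0, hl, hs⟩ := hc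
  refine ⟨n + 1, Fin.snoc c γ, ?_, ?_, ?_, ?_⟩
  · intro i
    induction i using Fin.lastCases with
    | last => simpa using hγ
    | cast j => simpa using hmem j
  · have : ((0 : Fin (n + 2))) = (0 : Fin (n+1)).castSucc := by simp
    rw [this, Fin.snoc_castSucc]; exact h0
  · simp
  · intro i
    induction i using Fin.lastCases with
    | last =>
      rw [Fin.succ_last, Fin.snoc_last, Fin.snoc_castSucc, hl]
      exact hf
    | cast j =>
      rw [Fin.snoc_castSucc, Fin.succ_castSucc, Fin.snoc_castSucc]
      exact hs j

lemma chain_rtg {X : Set A} :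
    ∀ (n : ℕ) (c : Fin (n + 1) → A), (∀ i, c i ∈ X) →
      (∀ i : Fin n, form (c i.castSucc) (c i.succ) ≠ 0) →
      Relation.ReflTransGen (formStep form X) (c 0) (c (Fin.last n)) := by
  intro n
  induction n with
  | zero =>
    intro c _ _
    have e : (Fin.last 0) = 0 := rfl
    rw [e]
  | succ n ih =>
    intro c hc hstep
    have h1 := ih (fun i => c i.castSucc) (fun i => hc _) (fun i => by
      show form (c i.castSucc.castSucc) (c i.succ.castSucc) ≠ 0
      rw [← Fin.succ_castSucc]
      exact hstep i.castSucc)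
    simp only [Fin.castSucc_zero] at h1
    refine h1.tail ?_
    have h2 : (Fin.last n).succ = Fin.last (n+1) := Fin.succ_last n
    rw [← h2]
    exact ⟨hc _, hc _, hstep (Fin.last n)⟩

lemma rtg_conn {X : Set A} {α β : A} (hα : α ∈ X)
    (h : Relation.ReflTransGen (formStep form X) α β) : ConnectedIn form X α β := by
  induction h with
  | refl => exact ⟨0, fun _ => α, fun _ => hα, rfl, rfl, fun i => i.elim0⟩
  | tail hab hbc ih => exact conn_snoc ih hbc.2.1 hbc.2.2

lemma conn_iff {X : Set A} {α β : A} :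
    ConnectedIn form X α β ↔ α ∈ X ∧ Relation.ReflTransGen (formStep form X) α β := by
  constructor
  · rintro ⟨n, c, hmem, h0, hl, hs⟩
    refine ⟨h0 ▸ hmem 0, ?_⟩
    rw [← h0, ← hl]
    exact chain_rtg n c hmem hs
  · rintro ⟨hα, h⟩; exact rtg_conn hα h

/-- the connected component of `α` in `R \ {0}` -/
def comp (form : A → A → F) (R : Set A) (α : A) : Set A :=
  {β | β ∈ R \ {0} ∧ Relation.ReflTransGen (formStep form (R \ {0})) α β}

lemma comp_subset {R : Set A} {α : A} : comp form R α ⊆ R \ {0} := fun _ hx => hx.1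

lemma comp_self {R : Set A} {α : A} (hα : α ∈ R \ {0}) : α ∈ comp form R α :=
  ⟨hα, .refl⟩

lemma comp_ext {R : Set A} {α β γ : A} (hβ : β ∈ comp form R α)
    (hγ : γ ∈ R \ {0}) (hf : form β γ ≠ 0) : γ ∈ comp form R α :=
  ⟨hγ, hβ.2.tail ⟨hβ.1, hγ, hf⟩⟩

lemma comp_eq (h : IsSymForm form) {R : Set A} {α β b : A}
    (hb1 : b ∈ comp form R α) (hb2 : b ∈ comp form R β) :
    comp form R α = comp form R β := by
  have hsym : ∀ {a b : A}, Relation.ReflTransGen (formStep form (R \ {0})) a b →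
      Relation.ReflTransGen (formStep form (R \ {0})) b a := fun hab =>
    haveI : Std.Symm (formStep form (R \ {0})) := ⟨fun _ _ hx => formStep_symm h (R \ {0}) hx⟩
    Std.Symm.symm _ _ hab
  have hαβ : Relation.ReflTransGen (formStep form (R \ {0})) α β :=
    hb1.2.trans (hsym hb2.2)
  have hβα : Relation.ReflTransGen (formStep form (R \ {0})) β α := hsym hαβ
  ext x
  exact ⟨fun hx => ⟨hx.1, hβα.trans hx.2⟩, fun hx => ⟨hx.1, hαβ.trans hx.2⟩⟩

lemma comp_zero_not_mem {R : Set A} {α : A} : (0 : A) ∉ comp form R α :=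
  fun hx => hx.1.2 rfl

lemma comp_union_sdiff {R : Set A} {α : A} :
    (comp form R α ∪ {0}) \ {0} = comp form R α := by
  ext x
  simp only [Set.mem_diff, Set.mem_union, Set.mem_singleton_iff]
  constructor
  · rintro ⟨h1 | h2, hne⟩
    · exact h1
    · exact absurd h2 hne
  · intro hx
    exact ⟨Or.inl hx, fun h0 => comp_zero_not_mem (h0 ▸ hx)⟩

lemma form_sub_right (h : IsSymForm form) (a b c : A) :
    form c (a - b) = form c a - form c b := by
  rw [h.symm, form_sub_left h, h.symm a, h.symm b]

lemma form_sub_sub (h : IsSymForm form) (a b : A) :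
    form (a - b) (a - b) = form a a - 2 * form a b + form b b := by
  rw [form_sub_left h, form_sub_right h, form_sub_right h, h.symm b a]
  ring

lemma form_add_add (h : IsSymForm form) (a b : A) :
    form (a + b) (a + b) = form a a + 2 * form a b + form b b := by
  rw [h.add_left, form_add_right h, form_add_right h, h.symm b a]
  ring

end Aux

section Main
set_option linter.unusedSectionVars false
variable {F : Type*} [Field F] [CharZero F] {A : Type*} [AddCommGroup A]
  {form : A → A → F} {R : Set A}

lemma orth_all (hE : IsEARS form R) (hnd : ∀ a : A, (∀ b, form a b = 0) → a = 0)
    {a : A} (hR : ∀ β ∈ R, form a β = 0) : a = 0 := by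
  have hsym := hE.toIsSymForm
  refine hnd a (fun b => ?_)
  have hb : b ∈ AddSubgroup.closure R := hE.closure_eq_top ▸ AddSubgroup.mem_top b
  refine AddSubgroup.closure_induction (p := fun x _ => form a x = 0)
    (fun x hx => hR x hx) (form_zero_right hsym a) ?_ ?_ hb
  · intro x y _ _ hx hy
    rw [form_add_right hsym x y a, hx, hy, add_zero]
  · intro x _ hx
    rw [hsym.symm a (-x), form_neg_left hsym x a, hsym.symm x a, hx, neg_zero]

lemma radical_eq_zero (hE : IsEARS form R) (hnd : ∀ a : A, (∀ b, form a b = 0) → a = 0) :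
    formRadical form = ({0} : Set A) := by
  ext a
  constructor
  · intro ha; exact hnd a ha
  · rintro rfl; exact fun b => form_zero_left_s6 hE.toIsSymForm b

/-- elements of a component are orthogonal to roots outside the component -/
lemma comp_orth (hE : IsEARS form R) {α α' β : A} (hα' : α' ∈ comp form R α)
    (hβ : β ∈ R) (hout : β ∉ comp form R α) : form α' β = 0 := by
  by_contra hne
  rcases eq_or_ne β 0 with rfl | hβ0
  · exact hne (form_zero_right hE.toIsSymForm α')
  · exact hout (comp_ext hα' ⟨hβ, hβ0⟩ hne)

/-- nondegeneracy of the form on the subgroup generated by a component -/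
lemma comp_nondeg (hE : IsEARS form R) (hnd : ∀ a : A, (∀ b, form a b = 0) → a = 0)
    {α : A} : ∀ a ∈ AddSubgroup.closure (comp form R α ∪ {0}),
      (∀ b ∈ AddSubgroup.closure (comp form R α ∪ {0}), form a b = 0) → a = 0 := by
  have hsym := hE.toIsSymForm
  intro a ha h0
  refine orth_all hE hnd (fun β hβ => ?_)
  by_cases hβc : β ∈ comp form R α
  · exact h0 β (AddSubgroup.subset_closure (Or.inl hβc))
  · refine AddSubgroup.closure_induction (p := fun x _ => form x β = 0) ?_
      (form_zero_left_s6 hsym β) ?_ ?_ ha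
    · rintro x (hx | hx)
      · exact comp_orth hE hx hβ hβc
      · rw [Set.mem_singleton_iff] at hx
        rw [hx]; exact form_zero_left_s6 hsym β
    · intro x y _ _ hx hy
      rw [hsym.add_left x y β, hx, hy, add_zero]
    · intro x _ hx
      rw [form_neg_left hsym x β, hx, neg_zero]

/-- every component contains a real root -/
lemma comp_real_root (hE : IsEARS form R) (hnd : ∀ a : A, (∀ b, form a b = 0) → a = 0)
    {α : A} (hα : α ∈ R \ {0}) : ∃ γ ∈ comp form R α, form γ γ ≠ 0 := by
  have hsym := hE.toIsSymForm
  by_cases hαα : form α α ≠ 0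
  · exact ⟨α, comp_self hα, hαα⟩
  push_neg at hαα
  have hex : ∃ β ∈ R, form α β ≠ 0 := by
    by_contra hno
    push_neg at hno
    exact hα.2 (orth_all hE hnd hno)
  obtain ⟨β, hβR, hαβ⟩ := hex
  have hβ0 : β ≠ 0 := fun h => hαβ (h ▸ form_zero_right hsym α)
  have hβc : β ∈ comp form R α := comp_ext (comp_self hα) ⟨hβR, hβ0⟩ hαβ
  by_cases hββ : form β β ≠ 0
  · exact ⟨β, hβc, hββ⟩
  push_neg at hββ
  have h2 : (2 : F) * form α β ≠ 0 := mul_ne_zero two_ne_zero hαβ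
  rcases hE.ns_string α hα.1 hαα β hβR hαβ with h1 | h1
  · -- β - α ∈ R
    have hval : form (β - α) (β - α) = -(2 * form α β) := by
      rw [form_sub_sub hsym, hββ, hαα, hsym.symm β α]
      ring
    have hvne : form (β - α) (β - α) ≠ 0 := by rw [hval]; exact neg_ne_zero.mpr h2
    have hf : form α (β - α) ≠ 0 := by
      rw [form_sub_right hsym, hαα, sub_zero]
      exact hαβ
    have hne : β - α ≠ 0 := fun h => hf (h ▸ form_zero_right hsym α)
    exact ⟨β - α, comp_ext (comp_self hα) ⟨h1, hne⟩ hf, hvne⟩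
  · -- β + α ∈ R
    have hval : form (β + α) (β + α) = 2 * form α β := by
      rw [form_add_add hsym, hββ, hαα, hsym.symm β α]
      ring
    have hvne : form (β + α) (β + α) ≠ 0 := by rw [hval]; exact h2
    have hf : form α (β + α) ≠ 0 := by
      rw [form_add_right hsym, hαα, add_zero]
      exact hαβ
    have hne : β + α ≠ 0 := fun h => hf (h ▸ form_zero_right hsym α)
    exact ⟨β + α, comp_ext (comp_self hα) ⟨h1, hne⟩ hf, hvne⟩

/-- reflection condition for a component -/
lemma comp_reflect (hE : IsEARS form R) {α0 : A} :
    ∀ α ∈ comp form R α0 ∪ {0}, form α α ≠ 0 → ∀ β ∈ comp form R α0 ∪ {0}, ∀ k : ℤ,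
      2 * form β α = (k : F) * form α α → β - k • α ∈ comp form R α0 ∪ {0} := by
  have hsym := hE.toIsSymForm
  intro α hαS hαα β hβS k hk
  have hα0 : α ≠ 0 := fun h => hαα (h ▸ form_zero_left_s6 hsym (0 : A))
  have hαc : α ∈ comp form R α0 := hαS.resolve_right (fun h => hα0 h)
  rcases hβS with hβc | hβ0
  · -- β in the component; use the string property
    obtain ⟨p, q, hσ, hmem⟩ := hE.string α hαc.1.1 hαα β hβc.1.1
    have hkpq : (k : F) = (p : F) - (q : F) := by
      have := hk.symm.trans hσ
      exact mul_right_cancel₀ hαα this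
    have hkZ : k = (p : ℤ) - (q : ℤ) := by exact_mod_cast hkpq
    have hmem' : β + (-k) • α ∈ R := by
      rw [hmem (-k)]
      omega
    have hδ : β - k • α = β + (-k) • α := by rw [neg_smul, sub_eq_add_neg]
    rcases eq_or_ne k 0 with rfl | hk0
    · left
      simpa using hβc
    · -- the new root is connected to α
      have e1 : form (β - k • α) α = form β α - (k : F) * form α α := by
        rw [form_sub_left hsym, form_zsmul_left_s6 hsym]
      have e2 : (2 : F) * form (β - k • α) α = -((k : F) * form α α) := by
        rw [e1]
        linear_combination hk
      have hfne : form (β - k • α) α ≠ 0 := by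
        intro h0
        rw [h0, mul_zero] at e2
        have : (k : F) * form α α = 0 := by linear_combination e2
        exact hαα ((mul_eq_zero.mp this).resolve_left
          (fun hc => hk0 (by exact_mod_cast hc)))
      have hδR : β - k • α ∈ R := hδ ▸ hmem'
      have hδ0 : β - k • α ≠ 0 := fun h => hfne (h ▸ form_zero_left_s6 hsym α)
      have hαδ : form α (β - k • α) ≠ 0 := by rw [hsym.symm]; exact hfne
      exact Or.inl (comp_ext hαc ⟨hδR, hδ0⟩ hαδ)
  · -- β = 0
    rw [Set.mem_singleton_iff] at hβ0
    subst hβ0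
    have hk0 : (k : F) * form α α = 0 := by
      rw [← hk, form_zero_left_s6 hsym, mul_zero]
    have : k = 0 := by
      have := (mul_eq_zero.mp hk0.symm.symm).resolve_right hαα
      exact_mod_cast this
    subst this
    right
    simp

/-- nonsingular condition for a component -/
lemma comp_ns (hE : IsEARS form R) {α0 : A} :
    ∀ γ ∈ comp form R α0 ∪ {0}, form γ γ = 0 → ∀ β ∈ comp form R α0 ∪ {0},
      form β γ ≠ 0 → (γ - β ∈ comp form R α0 ∪ {0} ∨ γ + β ∈ comp form R α0 ∪ {0}) := by
  have hsym := hE.toIsSymForm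
  intro γ hγS hγγ β hβS hβγ
  have hγ0 : γ ≠ 0 := fun h => hβγ (h ▸ form_zero_right hsym β)
  have hβ0 : β ≠ 0 := fun h => hβγ (h ▸ form_zero_left_s6 hsym γ)
  have hγc : γ ∈ comp form R α0 := hγS.resolve_right (fun h => hγ0 h)
  have hβc : β ∈ comp form R α0 := hβS.resolve_right (fun h => hβ0 h)
  have hγβ : form γ β ≠ 0 := by rw [hsym.symm]; exact hβγ
  rcases hE.ns_string γ hγc.1.1 hγγ β hβc.1.1 hγβ with h1 | h1
  · -- β - γ ∈ R, so γ - β ∈ R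
    left
    have hR : γ - β ∈ R := by
      have := hE.neg_mem _ h1
      rwa [neg_sub] at this
    have hf : form γ (γ - β) ≠ 0 := by
      rw [form_sub_right hsym, hγγ, zero_sub]
      exact neg_ne_zero.mpr hγβ
    have hne : γ - β ≠ 0 := fun h => hf (h ▸ form_zero_right hsym γ)
    exact Or.inl (comp_ext hγc ⟨hR, hne⟩ hf)
  · -- β + γ ∈ R
    right
    have hR : γ + β ∈ R := by rwa [add_comm]
    have hf : form γ (γ + β) ≠ 0 := by
      rw [form_add_right hsym, hγγ, zero_add]
      exact hγβ
    have hne : γ + β ≠ 0 := fun h => hf (h ▸ form_zero_right hsym γ)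
    exact Or.inl (comp_ext hγc ⟨hR, hne⟩ hf)

lemma comp_connected (hE : IsEARS form R) {α0 : A} :
    IsConnectedSet form (comp form R α0) := by
  have hsym := hE.toIsSymForm
  intro x hx y hy
  have hrtgsym : ∀ {a b : A}, Relation.ReflTransGen (formStep form (R \ {0})) a b →
      Relation.ReflTransGen (formStep form (R \ {0})) b a := fun hab =>
    haveI : Std.Symm (formStep form (R \ {0})) := ⟨fun _ _ hx => formStep_symm hsym (R \ {0}) hx⟩
    Std.Symm.symm _ _ hab
  have hxy : Relation.ReflTransGen (formStep form (R \ {0})) x y :=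
    (hrtgsym hx.2).trans hy.2
  -- upgrade the path to live inside the component
  have upgrade : ∀ y', x ∈ comp form R α0 →
      Relation.ReflTransGen (formStep form (R \ {0})) x y' →
      Relation.ReflTransGen (formStep form (comp form R α0)) x y' ∧
        y' ∈ comp form R α0 := by
    intro y' hx' h
    induction h with
    | refl => exact ⟨.refl, hx'⟩
    | tail hab hbc ih =>
      have hcmem := comp_ext ih.2 hbc.2.1 hbc.2.2
      exact ⟨ih.1.tail ⟨ih.2, hcmem, hbc.2.2⟩, hcmem⟩
  exact rtg_conn hx (upgrade y hx hxy).1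

lemma comp_main (hE : IsEARS form R) (hnd : ∀ a : A, (∀ b, form a b = 0) → a = 0)
    {α : A} (hα : α ∈ R \ {0}) :
    IsSubSupersystem form R (comp form R α ∪ {0}) ∧
      IsIrreducibleRSS form (comp form R α ∪ {0}) := by
  have hsym := hE.toIsSymForm
  constructor
  · refine ⟨?_, ?_, Or.inr rfl, comp_reflect hE, comp_ns hE⟩
    · rintro x (hx | hx)
      · exact hx.1.1
      · rw [Set.mem_singleton_iff] at hx; rw [hx]; exact hE.zero_mem
    · exact comp_nondeg hE hnd
  · constructor
    · obtain ⟨γ, hγc, hγγ⟩ := comp_real_root hE hnd hα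
      intro heq
      have hγmem : γ ∈ reRoots form (comp form R α ∪ {0}) := Or.inl ⟨Or.inl hγc, hγγ⟩
      rw [heq, Set.mem_singleton_iff] at hγmem
      exact hγγ (hγmem ▸ form_zero_left_s6 hsym (0 : A))
    · rw [radical_eq_zero hE hnd, comp_union_sdiff]
      exact comp_connected hE

end Main

theorem stmt6 {F : Type*} [Field F] [CharZero F] {A : Type*} [AddCommGroup A]
    (form : A → A → F) (R : Set A) (h : IsLFRSS form R) :
    (∀ S : Set A,
      (∃ α ∈ R \ {0}, S = {β ∈ R \ {0} | ConnectedIn form (R \ {0}) α β}) →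
      IsSubSupersystem form R (S ∪ {0}) ∧ IsIrreducibleRSS form (S ∪ {0})) ∧
    ∃ 𝒞 : Set (Set A),
      (∀ S ∈ 𝒞, IsSubSupersystem form R S ∧ IsIrreducibleRSS form S) ∧
      (∀ S ∈ 𝒞, ∀ T ∈ 𝒞, S ≠ T → ∀ a ∈ S, ∀ b ∈ T, form a b = 0) ∧
      (∀ S ∈ 𝒞, ∀ T ∈ 𝒞, S ≠ T → Disjoint (S \ {0}) (T \ {0})) ∧
      R \ {0} = ⋃ S ∈ 𝒞, S \ {0} := by 
  obtain ⟨hE, hnd⟩ := h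
  have hsym := hE.toIsSymForm
  have hset : ∀ α ∈ R \ {0},
      {β ∈ R \ {0} | ConnectedIn form (R \ {0}) α β} = comp form R α := by
    intro α hα
    ext x
    simp only [Set.mem_setOf_eq]
    constructor
    · rintro ⟨hx, hconn⟩
      exact ⟨hx, (conn_iff.mp hconn).2⟩
    · rintro ⟨hx, hrtg⟩
      exact ⟨hx, conn_iff.mpr ⟨hα, hrtg⟩⟩
  constructor
  · rintro S ⟨α, hα, rfl⟩
    rw [hset α hα]
    exact comp_main hE hnd hα
  · refine ⟨(fun α => comp form R α ∪ {0}) '' (R \ {0}), ?_, ?_, ?_, ?_⟩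
    · rintro S ⟨α, hα, rfl⟩
      exact comp_main hE hnd hα
    · rintro S ⟨α, hα, rfl⟩ T ⟨β, hβ, rfl⟩ hST a ha b hb
      rcases ha with ha | ha
      · rcases hb with hb | hb
        · by_contra hne
          have hbα : b ∈ comp form R α := comp_ext ha (comp_subset hb) hne
          refine hST ?_
          show comp form R α ∪ {0} = comp form R β ∪ {0}
          rw [comp_eq hsym hbα hb]
        · rw [Set.mem_singleton_iff] at hb; rw [hb]; exact form_zero_right hsym a
      · rw [Set.mem_singleton_iff] at ha; rw [ha]; exact form_zero_left_s6 hsym b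
    · rintro S ⟨α, hα, rfl⟩ T ⟨β, hβ, rfl⟩ hST
      rw [Set.disjoint_left]
      intro x hx hx'
      rw [comp_union_sdiff] at hx hx'
      refine hST ?_
      show comp form R α ∪ {0} = comp form R β ∪ {0}
      rw [comp_eq hsym hx hx']
    · ext x
      simp only [Set.mem_iUnion]
      constructor
      · intro hx
        refine ⟨comp form R x ∪ {0}, ⟨x, hx, rfl⟩, ?_⟩
        rw [comp_union_sdiff]
        exact comp_self hx
      · rintro ⟨S, ⟨α, hα, rfl⟩, hx⟩
        rw [comp_union_sdiff] at hx
        exact comp_subset hx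
end

section
/- Let (A, (·,·), R) be an extended affine root supersystem over a field F of characteristic zero. If α, β ∈ R_re \ {0} are connected in R_re \ {0} (there is a finite chain α₁ = α, …, α_n = β in R_re \ {0} with (α_i, α_{i+1}) ≠ 0 for all i), then (α,α)/(β,β) lies in the image of ℚ in F. -/
open Pointwise

private lemma step_lemma {F : Type*} [Field F] [CharZero F] {A : Type*} [AddCommGroup A]
    {form : A → A → F} {R : Set A} (h : IsEARS form R) {a g : A}
    (haR : a ∈ R) (haa : form a a ≠ 0) (hgR : g ∈ R) (hgg : form g g ≠ 0)
    (hne : form a g ≠ 0) : ∃ q : ℚ, form a a = (q : F) * form g g := by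
  obtain ⟨k, hk⟩ := h.cartan a haR haa g hgR
  obtain ⟨m, hm⟩ := h.cartan g hgR hgg a haR
  have hk0 : (k : F) ≠ 0 := by
    intro h0
    rw [h0, zero_mul] at hk
    exact hne ((mul_eq_zero.mp hk).resolve_left two_ne_zero)
  have hkQ : (k : ℚ) ≠ 0 := by exact_mod_cast fun hh => hk0 (by exact_mod_cast hh)
  have hsym : form g a = form a g := h.symm g a
  refine ⟨(m : ℚ) / (k : ℚ), ?_⟩
  have hcast : (((m : ℚ) / (k : ℚ) : ℚ) : F) = (m : F) / (k : F) := by push_cast; ring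
  rw [hcast]
  rw [hsym] at hm
  have hkm : (k : F) * form a a = (m : F) * form g g := by
    rw [← hk, ← hm]
  field_simp
  linear_combination hkm

private lemma chain_lemma {F : Type*} [Field F] [CharZero F] {A : Type*} [AddCommGroup A]
    {form : A → A → F} {R : Set A} (h : IsEARS form R) :
    ∀ (n : ℕ) (c : Fin (n + 1) → A),
      (∀ i, c i ∈ reRoots form R \ {0}) →
      (∀ i : Fin n, form (c i.castSucc) (c i.succ) ≠ 0) →
      ∃ q : ℚ, form (c 0) (c 0) = (q : F) * form (c (Fin.last n)) (c (Fin.last n)) := by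
  have mem : ∀ x : A, x ∈ reRoots form R \ {0} → x ∈ R ∧ form x x ≠ 0 := by
    intro x ⟨hx, hx0⟩
    rcases hx with hx | hx
    · exact ⟨hx.1, hx.2⟩
    · exact absurd hx hx0
  intro n
  induction n with
  | zero =>
      intro c _ _
      exact ⟨1, by simp [Fin.last]⟩
  | succ n ih =>
      intro c hcX hadj
      have h0 := mem _ (hcX 0)
      have h1 := mem _ (hcX 1)
      have hne : form (c 0) (c 1) ≠ 0 := by
        have := hadj 0
        simpa using this
      obtain ⟨q1, hq1⟩ := step_lemma h h0.1 h0.2 h1.1 h1.2 hne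
      obtain ⟨q2, hq2⟩ := ih (fun i => c i.succ) (fun i => hcX i.succ)
        (fun i => by
          have := hadj i.succ
          exact this)
      refine ⟨q1 * q2, ?_⟩
      have hlast : (Fin.last n).succ = Fin.last (n + 1) := rfl
      rw [hq1]
      have : c (0 : Fin (n+1)).succ = c 1 := rfl
      rw [this] at hq2
      rw [hq2, hlast]
      push_cast
      ring

theorem stmt10 {F : Type*} [Field F] [CharZero F] {A : Type*} [AddCommGroup A]
    (form : A → A → F) (R : Set A) (h : IsEARS form R) (α β : A)
    (hα : α ∈ reRoots form R) (hα0 : α ≠ 0) (hβ : β ∈ reRoots form R) (hβ0 : β ≠ 0)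
    (hc : ConnectedIn form (reRoots form R \ {0}) α β) :
    ∃ q : ℚ, form α α = (q : F) * form β β := by
  obtain ⟨n, c, hcX, hc0, hclast, hadj⟩ := hc
  obtain ⟨q, hq⟩ := chain_lemma h n c hcX hadj
  rw [hc0, hclast] at hq
  exact ⟨q, hq⟩
end

section
/- Let (A, (·,·), R) be an extended affine root supersystem over a field F of characteristic zero. Every subset B of R_re \ {0} whose elements are mutually disconnected in R_re \ {0} (i.e., no two distinct elements of B are joined by a finite chain α₁, …, α_n in R_re \ {0} with (α_i, α_{i+1}) ≠ 0 for all i) is ℤ-linearly independent in A. -/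
open Pointwise

theorem stmt11 {F : Type*} [Field F] [CharZero F] {A : Type*} [AddCommGroup A]
    (form : A → A → F) (R : Set A) (h : IsEARS form R)
    (B : Set A) (hB : B ⊆ reRoots form R \ {0})
    (hdis : ∀ a ∈ B, ∀ b ∈ B, a ≠ b → ¬ ConnectedIn form (reRoots form R \ {0}) a b) :
    LinearIndependent ℤ (fun b : B => (b : A)) := by
  classical
  -- form as an additive hom in the first variable
  have hadd : ∀ b, ∀ x y : A, form (x + y) b = form x b + form y b :=
    fun b x y => h.add_left x y b
  let φ : A → (A →+ F) := fun b => AddMonoidHom.mk' (fun a => form a b) (fun x y => hadd b x y)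
  -- self-pairing nonzero
  have hself : ∀ a ∈ B, form a a ≠ 0 := by
    intro a ha
    rcases hB ha with ⟨hre, hne⟩
    rcases hre with h1 | h0
    · exact h1.2
    · exact absurd h0 hne
  -- orthogonality
  have hortho : ∀ a ∈ B, ∀ b ∈ B, a ≠ b → form a b = 0 := by
    intro a ha b hb hab
    by_contra hfo
    apply hdis a ha b hb hab
    refine ⟨1, ![a, b], ?_, rfl, rfl, ?_⟩
    · intro i
      fin_cases i
      · exact hB ha
      · exact hB hb
    · intro i
      fin_cases i
      simpa using hfo
  rw [linearIndependent_iff']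
  intro s g hsum j hj
  have h0 : φ (j : A) (∑ i ∈ s, g i • (i : A)) = 0 := by rw [hsum]; simp
  rw [map_sum] at h0
  have hterm : ∀ i ∈ s, φ (j : A) (g i • (i : A)) = if i = j then (g j : F) * form j j else 0 := by
    intro i _
    rw [map_zsmul]
    by_cases hij : i = j
    · subst hij; simp [φ, zsmul_eq_mul]
    · have : (i : A) ≠ (j : A) := fun hc => hij (Subtype.ext hc)
      simp [φ, hortho i i.2 j j.2 this, hij]
  rw [Finset.sum_congr rfl hterm, Finset.sum_ite_eq' s j] at h0
  simp only [if_pos hj] at h0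
  rcases mul_eq_zero.mp h0 with hg | hz
  · exact_mod_cast hg
  · exact absurd hz (hself j j.2)
end
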